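/- Let Θ ⊆ ℝ be compact with nonempty interior, let k ≥ k0 ≥ k* ≥ 2 with k + k0 > 2k*, set r = k + k0 − 2k* + 1 ≥ 2, and fix G* ∈ E_{k*}(Θ) having an atom in the interior of Θ. Then the supremum of W̃(G, G') / W_r^r(G, G') over all pairs G ∈ E_{k'}(Θ) with k' ≤ k and G' ∈ E_{k0}(Θ) with G ≠ G' is infinite. -/

import Mathlib

open MeasureTheory

attribute [local instance] Classical.propDecidable

/-- A finite mixing measure: positive weights `p` summing to one over distinct atoms. -/
structure MixingMeasure (E : Type*) where
  order : ℕ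
  p : Fin order → ℝ
  atom : Fin order → E
  p_pos : ∀ i, 0 < p i
  p_sum : ∑ i, p i = 1
  atom_inj : Function.Injective atom

namespace MixingMeasure

/-- `G ∈ O_k(Θ)`: mixing measures of order at most `k` supported in `Θ`. -/
def memO {E : Type*} (G : MixingMeasure E) (k : ℕ) (Θ : Set E) : Prop :=
  G.order ≤ k ∧ ∀ i, G.atom i ∈ Θ

/-- `G ∈ E_k(Θ)`: mixing measures of order exactly `k` supported in `Θ`. -/
def memE {E : Type*} (G : MixingMeasure E) (k : ℕ) (Θ : Set E) : Prop :=
  G.order = k ∧ ∀ i, G.atom i ∈ Θ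

/-- `G ∈ O_{k,c0}(Θ)`: order at most `k`, support in `Θ`, weights at least `c0`. -/
def memOc {E : Type*} (G : MixingMeasure E) (k : ℕ) (c0 : ℝ) (Θ : Set E) : Prop :=
  G.memO k Θ ∧ ∀ i, c0 ≤ G.p i

/-- Two mixing measures represent the same measure (equal up to relabelling). -/
def MixEq {E : Type*} (G G' : MixingMeasure E) : Prop :=
  ∃ e : Fin G.order ≃ Fin G'.order, ∀ i, G'.atom (e i) = G.atom i ∧ G'.p (e i) = G.p i

end MixingMeasure

/-- The mixture density `p_G`. -/
noncomputable def mixDensity {E X : Type*} (f : E → X → ℝ) (G : MixingMeasure E) (x : X) : ℝ :=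
  ∑ i, G.p i * f (G.atom i) x

/-- Voronoi cell `A_j(G)` generated by the atoms of `G0`, with respect to the
ground distance `D`. -/
noncomputable def voronoiD {E : Type*} (D : E → E → ℝ) (G G0 : MixingMeasure E)
    (j : Fin G0.order) : Finset (Fin G.order) :=
  Finset.univ.filter fun i => ∀ l, D (G.atom i) (G0.atom j) ≤ D (G.atom i) (G0.atom l)

/-- The set of couplings between the weights of two mixing measures. -/
def couplings {E : Type*} (G G' : MixingMeasure E) : Set (Fin G.order → Fin G'.order → ℝ) :=
  {q | (∀ i j, 0 ≤ q i j) ∧ (∀ i, ∑ j, q i j = G.p i) ∧ (∀ j, ∑ i, q i j = G'.p j)}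

/-- The `r`-th power `W_r^r` of the order-`r` Wasserstein distance between mixing
measures, with ground distance `D`. -/
noncomputable def wassersteinPow {E : Type*} (D : E → E → ℝ) (r : ℕ)
    (G G' : MixingMeasure E) : ℝ :=
  sInf {c | ∃ q ∈ couplings G G', c = ∑ i, ∑ j, q i j * D (G.atom i) (G'.atom j) ^ r}

/-- The absolute-value distance on `ℝ`. -/
noncomputable def absDist (a b : ℝ) : ℝ := |a - b|

/-- The loss function `W̃(G, G')` of equation (11), defined relative to the Voronoi
cells generated by the atoms of the limiting mixing measure `Gstar`. -/
noncomputable def Wtilde (Gstar G G' : MixingMeasure ℝ) : ℝ :=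
  sInf {c | ∃ q ∈ couplings G G', c =
    (∑ l : Fin Gstar.order,
      ∑ i ∈ voronoiD absDist G Gstar l, ∑ j ∈ voronoiD absDist G' Gstar l,
        q i j * |G.atom i - G'.atom j| ^
          ((voronoiD absDist G Gstar l).card + (voronoiD absDist G' Gstar l).card - 1))
    + ∑ i, ∑ j,
        if ∃ l, i ∈ voronoiD absDist G Gstar l ∧ j ∈ voronoiD absDist G' Gstar l
        then 0 else q i j}

set_option maxHeartbeats 2000000 in
/-- equation (12), second part: when `k + k0 > 2k*` and `G*` has an
atom in the interior of `Θ`, the ratio `W̃(G, G') / W_r^r(G, G')` is unbounded, where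
`r = k + k0 - 2k* + 1`. -/
theorem Wtilde_wassersteinPow_ratio_unbounded
    (Θ : Set ℝ) (hΘc : IsCompact Θ) (hΘi : (interior Θ).Nonempty)
    (k k0 kstar : ℕ) (hks : 2 ≤ kstar) (hk0 : kstar ≤ k0) (hk : k0 ≤ k)
    (hsum : 2 * kstar < k + k0)
    (Gstar : MixingMeasure ℝ) (hGs : Gstar.memE kstar Θ)
    (hint : ∃ l, Gstar.atom l ∈ interior Θ) :
    ∀ M : ℝ, ∃ (k' : ℕ) (G G' : MixingMeasure ℝ), k' ≤ k ∧
      G.memE k' Θ ∧ G'.memE k0 Θ ∧ ¬G.MixEq G' ∧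
      M * wassersteinPow absDist (k + k0 - 2 * kstar + 1) G G' < Wtilde Gstar G G' := by
  intro M
  classical
  obtain ⟨hord, hmemT⟩ := hGs
  obtain ⟨l0, hl0⟩ := hint
  obtain ⟨ρ, hρpos, hball⟩ := Metric.mem_nhds_iff.mp (mem_interior_iff_mem_nhds.mp hl0)
  have h2n : 2 ≤ Gstar.order := by omega
  -- minimal gap between atoms of Gstar
  obtain ⟨γ, hγpos, hγle⟩ : ∃ γ : ℝ, 0 < γ ∧
      ∀ i j : Fin Gstar.order, i ≠ j → γ ≤ |Gstar.atom i - Gstar.atom j| := by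
    have hneOff : (Finset.univ.offDiag : Finset (Fin Gstar.order × Fin Gstar.order)).Nonempty := by
      refine ⟨(⟨0, by omega⟩, ⟨1, by omega⟩), Finset.mem_offDiag.mpr ⟨Finset.mem_univ _,
        Finset.mem_univ _, ?_⟩⟩
      simp [Fin.ext_iff]
    refine ⟨(Finset.univ : Finset (Fin Gstar.order)).offDiag.inf' hneOff
      (fun pr => |Gstar.atom pr.1 - Gstar.atom pr.2|), ?_, ?_⟩
    · rw [Finset.lt_inf'_iff]
      rintro ⟨i, j⟩ hij
      rw [Finset.mem_offDiag] at hij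
      exact abs_pos.mpr (sub_ne_zero.mpr (fun h => hij.2.2 (Gstar.atom_inj h)))
    · intro i j hij
      have hmem : (i, j) ∈ (Finset.univ : Finset (Fin Gstar.order)).offDiag :=
        Finset.mem_offDiag.mpr ⟨Finset.mem_univ _, Finset.mem_univ _, hij⟩
      exact Finset.inf'_le _ hmem
  -- numerology
  set m : ℕ := k0 - kstar with hmdef
  set b : ℕ := m + 1 with hbdef
  have hrb : k + k0 - 2 * kstar + 1 = b + (k - kstar) := by omega
  have hd1 : 1 ≤ k - kstar := by omega
  have hMx1 : (1:ℝ) ≤ max M 1 := le_max_right _ _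
  have hMxM : M ≤ max M 1 := le_max_left _ _
  have hMxpos : (0:ℝ) < max M 1 := lt_of_lt_of_le one_pos hMx1
  have hP0pos : 0 < Gstar.p l0 := Gstar.p_pos l0
  have hm1pos : (0:ℝ) < (m:ℝ) + 1 := by positivity
  -- choice of the scale ε
  obtain ⟨ε, hεpos, hεle1, hεγ, hερ, hmε2, hεP⟩ :
      ∃ ε : ℝ, 0 < ε ∧ ε ≤ 1 ∧ ε < γ / 2 ∧ ε < ρ ∧ (m:ℝ) * ε ^ 2 ≤ ε / 2 ∧
        max M 1 * 2 ^ (b + 1) * ε ≤ Gstar.p l0 := by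
    set e : ℝ := min (min (γ/4) (ρ/2))
      (min (1/(2*((m:ℝ)+1))) (Gstar.p l0/(max M 1 * 2^(b+1)))) with hedef
    have hepos : 0 < e := by
      apply lt_min (lt_min (by linarith) (by linarith))
      apply lt_min (by positivity) (by positivity)
    have he1 : e ≤ γ/4 := le_trans (min_le_left _ _) (min_le_left _ _)
    have he2 : e ≤ ρ/2 := le_trans (min_le_left _ _) (min_le_right _ _)
    have he3 : e ≤ 1/(2*((m:ℝ)+1)) := le_trans (min_le_right _ _) (min_le_left _ _)
    have he4 : e ≤ Gstar.p l0/(max M 1 * 2^(b+1)) := le_trans (min_le_right _ _) (min_le_right _ _)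
    have hme : (m:ℝ) * e ≤ 1/2 := by
      have h5 : (2*((m:ℝ)+1)) * e ≤ 1 := by
        rw [← le_div_iff₀' (by positivity)]
        exact he3
      nlinarith [Nat.cast_nonneg (α := ℝ) m, hepos]
    have he5 : 1/(2*((m:ℝ)+1)) ≤ 1/2 := by
      apply div_le_div_of_nonneg_left (by norm_num) (by norm_num)
      nlinarith [Nat.cast_nonneg (α := ℝ) m]
    refine ⟨e, hepos, by linarith, by linarith, by linarith, ?_, ?_⟩
    · nlinarith [hepos.le, hme]
    · have hpos : (0:ℝ) < max M 1 * 2^(b+1) := by positivity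
      rw [le_div_iff₀ hpos] at he4
      linarith [he4]
  -- early arithmetic facts (proved before the context gets large)
  have hP0le1 : Gstar.p l0 ≤ 1 := by
    have h1 : Gstar.p l0 ≤ ∑ i, Gstar.p i :=
      Finset.single_le_sum (fun i _ => (Gstar.p_pos i).le) (Finset.mem_univ l0)
    rw [Gstar.p_sum] at h1
    exact h1
  have hpow1 : ∀ x : ℝ, ε / 2 ≤ x → (ε / 2) ^ b ≤ x ^ b := by
    intro x hx
    exact pow_le_pow_left₀ (by positivity) hx b
  have hpow2 : (ε / 2) ^ b ≤ 1 := by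
    apply pow_le_one₀ (by positivity)
    linarith
  have hεd : ε ^ (k - kstar) ≤ ε := by
    calc ε ^ (k - kstar) ≤ ε ^ 1 := pow_le_pow_of_le_one hεpos.le hεle1 hd1
      _ = ε := pow_one ε
  have hMxε : max M 1 * ε ≤ Gstar.p l0 / 2 ^ (b + 1) := by
    rw [le_div_iff₀ (by positivity)]
    calc max M 1 * ε * 2 ^ (b + 1) = max M 1 * 2 ^ (b + 1) * ε := by ring
      _ ≤ Gstar.p l0 := hεP
  have hfinal : max M 1 * ε ^ (k + k0 - 2 * kstar + 1) < Gstar.p l0 * (ε / 2) ^ b := by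
    rw [hrb, pow_add, div_pow]
    have hb1 : max M 1 * ε ^ (k - kstar) ≤ Gstar.p l0 / 2 ^ (b + 1) :=
      calc max M 1 * ε ^ (k - kstar) ≤ max M 1 * ε :=
            mul_le_mul_of_nonneg_left hεd hMxpos.le
        _ ≤ Gstar.p l0 / 2 ^ (b + 1) := hMxε
    have hb2 : Gstar.p l0 / 2 ^ (b + 1) < Gstar.p l0 / 2 ^ b := by
      apply div_lt_div_of_pos_left hP0pos (by positivity)
      exact pow_lt_pow_right₀ (by norm_num) (by omega)
    have hεb : (0:ℝ) < ε ^ b := by positivity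
    calc max M 1 * (ε ^ b * ε ^ (k - kstar))
        = (max M 1 * ε ^ (k - kstar)) * ε ^ b := by ring
      _ ≤ (Gstar.p l0 / 2 ^ (b + 1)) * ε ^ b := mul_le_mul_of_nonneg_right hb1 hεb.le
      _ < (Gstar.p l0 / 2 ^ b) * ε ^ b := mul_lt_mul_of_pos_right hb2 hεb
      _ = Gstar.p l0 * (ε ^ b / 2 ^ b) := by ring
  have hclusterle : ∀ t : Fin m, ((t:ℝ) + 1) * ε ^ 2 ≤ ε / 2 := by
    intro t
    have h1 : ((t:ℝ) + 1) ≤ (m:ℝ) := by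
      have := t.2
      exact_mod_cast Nat.succ_le_of_lt this
    calc ((t:ℝ) + 1) * ε ^ 2 ≤ (m:ℝ) * ε ^ 2 :=
          mul_le_mul_of_nonneg_right h1 (sq_nonneg ε)
      _ ≤ ε / 2 := hmε2
  have hclusterpos : ∀ t : Fin m, 0 < ((t:ℝ) + 1) * ε ^ 2 := by
    intro t; positivity
  have harith : ∀ u : ℝ, 0 < u → u ≤ ε / 2 →
      ε / 2 ≤ ε - u ∧ ε - u ≤ ε ∧ 0 ≤ ε - u := by
    intro u h1 h2
    exact ⟨by linarith, by linarith, by linarith⟩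
  -- the membership criterion for Voronoi cells
  have hcell : ∀ (x : ℝ) (cc : Fin Gstar.order), |x - Gstar.atom cc| < γ / 2 →
      ∀ l : Fin Gstar.order,
        (∀ m' : Fin Gstar.order, |x - Gstar.atom l| ≤ |x - Gstar.atom m'|) ↔ l = cc := by
    intro x cc hx l
    constructor
    · intro h
      by_contra hlc
      have h1 := h cc
      have h2 := hγle l cc hlc
      have h3 := abs_sub_le (Gstar.atom l) x (Gstar.atom cc)
      rw [abs_sub_comm (Gstar.atom l) x] at h3
      linarith only [h1, h2, h3, hx, abs_nonneg (x - Gstar.atom l)]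
    · intro hl m'
      rw [hl]
      rcases eq_or_ne m' cc with h | hm
      · rw [h]
      · have h2 := hγle m' cc hm
        have h3 := abs_sub_le (Gstar.atom m') x (Gstar.atom cc)
        rw [abs_sub_comm (Gstar.atom m') x] at h3
        linarith only [h2, h3, hx]
  -- the perturbed measure G
  set Ga : Fin Gstar.order → ℝ := fun i => if i = l0 then Gstar.atom l0 + ε else Gstar.atom i
    with hGadef
  have hGa_ne : ∀ i, i ≠ l0 → Ga i = Gstar.atom i := by
    intro i hi; simp [hGadef, hi]
  have hGa_l0 : Ga l0 = Gstar.atom l0 + ε := by simp [hGadef]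
  have hGainj : Function.Injective Ga := by
    intro i j hij
    by_cases hi : i = l0 <;> by_cases hj : j = l0
    · rw [hi, hj]
    · exfalso
      rw [hi, hGa_l0, hGa_ne j hj] at hij
      have h1 := hγle j l0 hj
      rw [← hij] at h1
      have h2 : |Gstar.atom l0 + ε - Gstar.atom l0| = ε := by
        rw [show Gstar.atom l0 + ε - Gstar.atom l0 = ε by ring, abs_of_nonneg hεpos.le]
      rw [h2] at h1; linarith
    · exfalso
      rw [hj, hGa_l0, hGa_ne i hi] at hij
      have h1 := hγle i l0 hi
      rw [hij] at h1
      have h2 : |Gstar.atom l0 + ε - Gstar.atom l0| = ε := by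
        rw [show Gstar.atom l0 + ε - Gstar.atom l0 = ε by ring, abs_of_nonneg hεpos.le]
      rw [h2] at h1; linarith
    · rw [hGa_ne i hi, hGa_ne j hj] at hij
      exact Gstar.atom_inj hij
  set G : MixingMeasure ℝ := ⟨Gstar.order, Gstar.p, Ga, Gstar.p_pos, Gstar.p_sum, hGainj⟩
    with hGdef
  -- the measure G' : atoms of Gstar, with the atom at l0 split into a cluster of m+1 atoms
  set c : ℝ := (Gstar.p l0) / ((m:ℝ) + 1) with hcdef
  have hcpos : 0 < c := by positivity
  have hmc : ((m:ℝ) + 1) * c = Gstar.p l0 := by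
    rw [hcdef]; field_simp
  set A : Fin Gstar.order ⊕ Fin m → ℝ :=
    Sum.elim Gstar.atom (fun t => Gstar.atom l0 + ((t:ℝ) + 1) * ε ^ 2) with hAdef
  set P : Fin Gstar.order ⊕ Fin m → ℝ :=
    Sum.elim (fun i => if i = l0 then c else Gstar.p i) (fun _ => c) with hPdef
  have hAinj : Function.Injective A := by
    rintro (i | t) (j | s) hij
    · rw [hAdef] at hij; simp only [Sum.elim_inl] at hij
      exact congrArg Sum.inl (Gstar.atom_inj hij)
    · exfalso
      rw [hAdef] at hij; simp only [Sum.elim_inl, Sum.elim_inr] at hij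
      by_cases hi : i = l0
      · rw [hi] at hij; linarith [hclusterpos s]
      · have h1 := hγle i l0 hi
        have h2 : |Gstar.atom i - Gstar.atom l0| = ((s:ℝ) + 1) * ε ^ 2 := by
          rw [hij]
          rw [show Gstar.atom l0 + ((s:ℝ) + 1) * ε ^ 2 - Gstar.atom l0
            = ((s:ℝ) + 1) * ε ^ 2 by ring, abs_of_pos (hclusterpos s)]
        rw [h2] at h1
        linarith [hclusterle s, hεγ, hεpos, hγpos]
    · exfalso
      rw [hAdef] at hij; simp only [Sum.elim_inl, Sum.elim_inr] at hij
      by_cases hj : j = l0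
      · rw [hj] at hij; linarith [hclusterpos t]
      · have h1 := hγle j l0 hj
        have h2 : |Gstar.atom j - Gstar.atom l0| = ((t:ℝ) + 1) * ε ^ 2 := by
          rw [← hij]
          rw [show Gstar.atom l0 + ((t:ℝ) + 1) * ε ^ 2 - Gstar.atom l0
            = ((t:ℝ) + 1) * ε ^ 2 by ring, abs_of_pos (hclusterpos t)]
        rw [h2] at h1
        linarith [hclusterle t, hεγ, hεpos, hγpos]
    · rw [hAdef] at hij; simp only [Sum.elim_inr] at hij
      have h1 : ((t:ℝ) + 1) * ε ^ 2 = ((s:ℝ) + 1) * ε ^ 2 := by linarith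
      have h2 : (t:ℝ) = (s:ℝ) := by
        have hε2 : (0:ℝ) < ε ^ 2 := by positivity
        have := mul_right_cancel₀ (ne_of_gt hε2) h1
        linarith
      exact congrArg Sum.inr (Fin.ext (by exact_mod_cast h2))
  have hPpos : ∀ x, 0 < P x := by
    rintro (i | t)
    · rw [hPdef]; simp only [Sum.elim_inl]
      split
      · exact hcpos
      · exact Gstar.p_pos i
    · rw [hPdef]; simp only [Sum.elim_inr]; exact hcpos
  have hPsum : ∑ x : Fin Gstar.order ⊕ Fin m, P x = 1 := by
    rw [Fintype.sum_sum_type]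
    have h1 : ∀ i : Fin Gstar.order, P (Sum.inl i)
        = Gstar.p i + (if i = l0 then c - Gstar.p l0 else 0) := by
      intro i
      rw [hPdef]; simp only [Sum.elim_inl]
      split
      · rename_i h; subst h; ring
      · ring
    rw [Finset.sum_congr rfl (fun i _ => h1 i)]
    rw [Finset.sum_add_distrib, Gstar.p_sum, Finset.sum_ite_eq' Finset.univ l0]
    simp only [Finset.mem_univ, if_true, Finset.sum_const, Finset.card_univ,
      Fintype.card_fin, nsmul_eq_mul, hPdef]
    have hmne : ((m:ℝ) + 1) ≠ 0 := ne_of_gt hm1pos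
    have hmc : ((m:ℝ) + 1) * c = Gstar.p l0 := by
      rw [hcdef]; field_simp
    have hsc : ∑ _x : Fin m, c = (m:ℝ) * c := by
      rw [Finset.sum_const, Finset.card_univ, Fintype.card_fin, nsmul_eq_mul]
    simp only [Sum.elim_inr]
    linarith [hmc, hsc]
  have hPsum' : ∑ j : Fin (Gstar.order + m), P (finSumFinEquiv.symm j) = 1 := by
    rw [Equiv.sum_comp finSumFinEquiv.symm P]; exact hPsum
  have hAinj' : Function.Injective (fun j : Fin (Gstar.order + m) => A (finSumFinEquiv.symm j)) :=
    fun j j' h => finSumFinEquiv.symm.injective (hAinj h)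
  set G' : MixingMeasure ℝ :=
    ⟨Gstar.order + m, fun j => P (finSumFinEquiv.symm j), fun j => A (finSumFinEquiv.symm j),
      fun j => hPpos _, hPsum', hAinj'⟩ with hG'def
  have hGatom : ∀ i, G.atom i = Ga i := fun _ => rfl
  have hGp : ∀ i : Fin Gstar.order, G.p i = Gstar.p i := fun _ => rfl
  have hG'atom : ∀ j : Fin (Gstar.order + m), G'.atom j = A (finSumFinEquiv.symm j) :=
    fun _ => rfl
  have hG'p : ∀ j : Fin (Gstar.order + m), G'.p j = P (finSumFinEquiv.symm j) := fun _ => rfl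
  -- the cell-center map for atoms of G'
  set cl : Fin (Gstar.order + m) → Fin Gstar.order :=
    fun j => Sum.elim id (fun _ => l0) (finSumFinEquiv.symm j) with hcldef
  have hGnear : ∀ i, |G.atom i - Gstar.atom i| < γ / 2 := by
    intro i
    rw [hGatom]
    by_cases hi : i = l0
    · rw [hi, hGa_l0, show Gstar.atom l0 + ε - Gstar.atom l0 = ε by ring,
        abs_of_nonneg hεpos.le]
      exact hεγ
    · rw [hGa_ne i hi, sub_self, abs_zero]
      exact half_pos hγpos
  have hG'near : ∀ j, |G'.atom j - Gstar.atom (cl j)| < γ / 2 := by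
    intro j
    rw [hG'atom, hcldef]
    simp only []
    rcases h : finSumFinEquiv.symm j with i | t
    · rw [hAdef]
      simp only [Sum.elim_inl, id_eq, sub_self, abs_zero]
      exact half_pos hγpos
    · rw [hAdef]
      simp only [Sum.elim_inl, Sum.elim_inr]
      rw [show Gstar.atom l0 + ((t:ℝ) + 1) * ε ^ 2 - Gstar.atom l0 = ((t:ℝ) + 1) * ε ^ 2 by ring,
        abs_of_pos (hclusterpos t)]
      linarith only [hclusterle t, hεγ, hεpos]
  have hVG : ∀ j : Fin Gstar.order, voronoiD absDist G Gstar j = {j} := by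
    intro j
    ext i
    simp only [voronoiD, Finset.mem_filter, Finset.mem_univ, true_and, Finset.mem_singleton]
    simp only [absDist]
    rw [hcell (G.atom i) i (hGnear i) j]
    exact eq_comm
  have hVG' : ∀ j : Fin Gstar.order,
      voronoiD absDist G' Gstar j = Finset.univ.filter (fun i' => cl i' = j) := by
    intro j
    ext i'
    simp only [voronoiD, Finset.mem_filter, Finset.mem_univ, true_and]
    simp only [absDist]
    rw [hcell (G'.atom i') (cl i') (hG'near i') j]
    exact eq_comm
  have hl0G : l0 ∈ voronoiD absDist G Gstar l0 := by
    rw [hVG]; exact Finset.mem_singleton_self _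
  have hmemV' : ∀ i', i' ∈ voronoiD absDist G' Gstar l0 ↔ cl i' = l0 := by
    intro i'
    rw [hVG']
    simp
  have hcardG : ∀ j, (voronoiD absDist G Gstar j).card = 1 := by
    intro j; rw [hVG]; simp
  have hcardG' : (voronoiD absDist G' Gstar l0).card = m + 1 := by
    rw [hVG' l0, Finset.card_filter]
    rw [← Equiv.sum_comp finSumFinEquiv (fun i' => if cl i' = l0 then 1 else 0)]
    rw [Fintype.sum_sum_type]
    have e1 : ∀ i : Fin Gstar.order,
        (if cl (finSumFinEquiv (Sum.inl i)) = l0 then 1 else 0) =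
        (if i = l0 then 1 else 0) := by
      intro i
      rw [hcldef]
      simp
    have e2 : ∀ t : Fin m,
        (if cl (finSumFinEquiv (Sum.inr t)) = l0 then 1 else 0) = 1 := by
      intro t
      rw [hcldef]
      simp
    rw [Finset.sum_congr rfl (fun i _ => e1 i), Finset.sum_congr rfl (fun t _ => e2 t)]
    rw [Finset.sum_ite_eq' Finset.univ l0 (fun _ => 1)]
    simp only [Finset.mem_univ, if_true, Finset.sum_const, Finset.card_univ, Fintype.card_fin,
      smul_eq_mul, mul_one]
    omega
  -- distances between the moved atom of G and the cluster atoms of G'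
  have hdist : ∀ i', cl i' = l0 →
      ε / 2 ≤ |G.atom l0 - G'.atom i'| ∧ |G.atom l0 - G'.atom i'| ≤ ε := by
    intro i' h
    rw [hGatom, hGa_l0, hG'atom]
    rw [hcldef] at h
    simp only [] at h
    rcases h' : finSumFinEquiv.symm i' with i | t <;> rw [h'] at h
    · simp only [Sum.elim_inl, id_eq] at h
      rw [hAdef]
      simp only [Sum.elim_inl, h]
      rw [show Gstar.atom l0 + ε - Gstar.atom l0 = ε by ring, abs_of_nonneg hεpos.le]
      constructor <;> linarith only [hεpos]
    · rw [hAdef]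
      simp only [Sum.elim_inr]
      rw [show Gstar.atom l0 + ε - (Gstar.atom l0 + ((t:ℝ) + 1) * ε ^ 2)
        = ε - ((t:ℝ) + 1) * ε ^ 2 by ring,
        abs_of_nonneg (harith _ (hclusterpos t) (hclusterle t)).2.2]
      exact ⟨(harith _ (hclusterpos t) (hclusterle t)).1, (harith _ (hclusterpos t) (hclusterle t)).2.1⟩
  have habs : ∀ x y : ℝ, absDist x y = |x - y| := fun _ _ => rfl
  -- the explicit coupling q0
  set q0 : Fin Gstar.order → Fin (Gstar.order + m) → ℝ := fun i j =>
    Sum.elim (fun i' => if i' = i then P (Sum.inl i') else 0)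
      (fun _ => if i = l0 then c else 0) (finSumFinEquiv.symm j) with hq0def
  have hq0nonneg : ∀ i j, 0 ≤ q0 i j := by
    intro i j
    rw [hq0def]
    simp only []
    rcases h : finSumFinEquiv.symm j with i' | t
    · simp only [Sum.elim_inl]
      split
      · exact (hPpos _).le
      · exact le_refl 0
    · simp only [Sum.elim_inr]
      split
      · exact hcpos.le
      · exact le_refl 0
  have hq0row : ∀ i, ∑ j, q0 i j = G.p i := by
    intro i
    rw [hq0def]
    simp only []
    rw [Equiv.sum_comp finSumFinEquiv.symm
      (Sum.elim (fun i' => if i' = i then P (Sum.inl i') else 0)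
        (fun _ => if i = l0 then c else 0))]
    rw [Fintype.sum_sum_type]
    simp only [Sum.elim_inl, Sum.elim_inr]
    rw [Finset.sum_ite_eq' Finset.univ i (fun i' => P (Sum.inl i'))]
    simp only [Finset.mem_univ, if_true, Finset.sum_const, Finset.card_univ, Fintype.card_fin,
      smul_eq_mul]
    rw [hGp, hPdef]
    simp only [Sum.elim_inl]
    by_cases hi : i = l0
    · rw [if_pos hi, hi, if_pos rfl, nsmul_eq_mul]
      linarith [hmc]
    · rw [if_neg hi, if_neg hi, smul_zero, add_zero]
  have hq0col : ∀ j, ∑ i, q0 i j = G'.p j := by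
    intro j
    obtain ⟨s, rfl⟩ : ∃ s, j = finSumFinEquiv s :=
      ⟨finSumFinEquiv.symm j, (Equiv.apply_symm_apply _ j).symm⟩
    rw [hG'p, hq0def]
    simp only [Equiv.symm_apply_apply]
    rcases s with i' | t
    · simp only [Sum.elim_inl]
      rw [Finset.sum_ite_eq Finset.univ i' (fun _ => P (Sum.inl i'))]
      simp
    · simp only [Sum.elim_inr]
      rw [Finset.sum_ite_eq' Finset.univ l0 (fun _ => c)]
      simp [hPdef]
  have hq0mem : q0 ∈ couplings G G' := ⟨hq0nonneg, hq0row, hq0col⟩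
  have hclj : ∀ j : Fin (Gstar.order + m), cl j ≠ l0 → q0 l0 j = 0 := by
    intro j h
    rw [hq0def]
    rw [hcldef] at h
    simp only [] at h ⊢
    rcases h' : finSumFinEquiv.symm j with i' | t <;> rw [h'] at h
    · simp only [Sum.elim_inl, id_eq] at h
      simp only [Sum.elim_inl]
      rw [if_neg h]
    · simp only [Sum.elim_inr] at h
      exact absurd rfl h
  have hterm : ∀ (i : Fin Gstar.order) (j : Fin (Gstar.order + m)),
      q0 i j * absDist (G.atom i) (G'.atom j) ^ (k + k0 - 2 * kstar + 1) ≤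
      (if i = l0 then q0 i j * ε ^ (k + k0 - 2 * kstar + 1) else 0) := by
    intro i j
    by_cases hi : i = l0
    · rw [if_pos hi, hi]
      by_cases hq : q0 l0 j = 0
      · rw [hq, zero_mul, zero_mul]
      · have hcl : cl j = l0 := by
          by_contra hcl
          exact hq (hclj j hcl)
        have hd := (hdist j hcl).2
        rw [habs]
        apply mul_le_mul_of_nonneg_left _ (hq0nonneg l0 j)
        exact pow_le_pow_left₀ (abs_nonneg _) hd _
    · rw [if_neg hi]
      have hz : q0 i j * absDist (G.atom i) (G'.atom j) ^ (k + k0 - 2 * kstar + 1) = 0 := by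
        rw [hq0def, habs]
        simp only []
        rcases h' : finSumFinEquiv.symm j with i' | t
        · simp only [Sum.elim_inl]
          by_cases hii : i' = i
          · rw [if_pos hii]
            have hz2 : |Ga i - A (Sum.inl i')| = 0 := by
              rw [hAdef]
              simp only [Sum.elim_inl]
              rw [hii, hGa_ne i hi, sub_self, abs_zero]
            rw [hGatom, hG'atom, h']
            rw [hz2, zero_pow (by omega), mul_zero]
          · rw [if_neg hii, zero_mul]
        · simp only [Sum.elim_inr]
          rw [if_neg hi, zero_mul]
      rw [hz]
  have hWub : wassersteinPow absDist (k + k0 - 2 * kstar + 1) G G' ≤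
      Gstar.p l0 * ε ^ (k + k0 - 2 * kstar + 1) := by
    have hbdd : BddBelow {cc | ∃ q ∈ couplings G G',
        cc = ∑ i, ∑ j, q i j * absDist (G.atom i) (G'.atom j) ^ (k + k0 - 2 * kstar + 1)} := by
      refine ⟨0, ?_⟩
      rintro x ⟨q, hq, rfl⟩
      apply Finset.sum_nonneg
      intro i _
      apply Finset.sum_nonneg
      intro j _
      exact mul_nonneg (hq.1 i j) (pow_nonneg (by rw [habs]; exact abs_nonneg _) _)
    have hmem : (∑ i, ∑ j, q0 i j * absDist (G.atom i) (G'.atom j) ^ (k + k0 - 2 * kstar + 1))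
        ∈ {cc | ∃ q ∈ couplings G G',
          cc = ∑ i, ∑ j, q i j * absDist (G.atom i) (G'.atom j) ^ (k + k0 - 2 * kstar + 1)} :=
      ⟨q0, hq0mem, rfl⟩
    refine le_trans (csInf_le hbdd hmem) ?_
    calc ∑ i, ∑ j, q0 i j * absDist (G.atom i) (G'.atom j) ^ (k + k0 - 2 * kstar + 1)
        ≤ ∑ i, ∑ j, (if i = l0 then q0 i j * ε ^ (k + k0 - 2 * kstar + 1) else 0) :=
          Finset.sum_le_sum (fun i _ => Finset.sum_le_sum (fun j _ => hterm i j))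
      _ = Gstar.p l0 * ε ^ (k + k0 - 2 * kstar + 1) := by
          have h5 : ∀ i : Fin Gstar.order,
              (∑ j, (if i = l0 then q0 i j * ε ^ (k + k0 - 2 * kstar + 1) else 0)) =
              (if i = l0 then G.p i * ε ^ (k + k0 - 2 * kstar + 1) else 0) := by
            intro i
            by_cases hi : i = l0
            · simp only [if_pos hi]
              rw [← Finset.sum_mul, hq0row]
            · simp only [if_neg hi, Finset.sum_const_zero]
          rw [Finset.sum_congr rfl (fun i _ => h5 i)]
          rw [Finset.sum_ite_eq' Finset.univ l0]
          simp only [Finset.mem_univ, if_true]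
          rfl
  have hWnonneg : 0 ≤ wassersteinPow absDist (k + k0 - 2 * kstar + 1) G G' := by
    apply Real.sInf_nonneg
    rintro x ⟨q, hq, rfl⟩
    apply Finset.sum_nonneg
    intro i _
    apply Finset.sum_nonneg
    intro j _
    exact mul_nonneg (hq.1 i j) (pow_nonneg (by rw [habs]; exact abs_nonneg _) _)
  -- lower bound for the Wtilde loss
  have hWt : Gstar.p l0 * (ε / 2) ^ b ≤ Wtilde Gstar G G' := by
    unfold Wtilde
    refine le_csInf ⟨_, ⟨q0, hq0mem, rfl⟩⟩ ?_
    rintro x ⟨q, ⟨hqpos, hqrow, hqcol⟩, rfl⟩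
    have hrowl0 : (∑ j ∈ voronoiD absDist G' Gstar l0, q l0 j) +
        (∑ j ∈ (voronoiD absDist G' Gstar l0)ᶜ, q l0 j) = Gstar.p l0 := by
      rw [Finset.sum_add_sum_compl]
      exact (hqrow l0).trans (hGp l0)
    have hT1 : (ε / 2) ^ b * ∑ j ∈ voronoiD absDist G' Gstar l0, q l0 j ≤
        ∑ l : Fin Gstar.order,
          ∑ i ∈ voronoiD absDist G Gstar l, ∑ j ∈ voronoiD absDist G' Gstar l,
            q i j * |G.atom i - G'.atom j| ^
              ((voronoiD absDist G Gstar l).card + (voronoiD absDist G' Gstar l).card - 1) := by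
      refine le_trans ?_ (Finset.single_le_sum (f := fun l =>
          ∑ i ∈ voronoiD absDist G Gstar l, ∑ j ∈ voronoiD absDist G' Gstar l,
            q i j * |G.atom i - G'.atom j| ^
              ((voronoiD absDist G Gstar l).card + (voronoiD absDist G' Gstar l).card - 1))
        (fun l _ => Finset.sum_nonneg (fun i _ => Finset.sum_nonneg (fun j _ =>
          mul_nonneg (hqpos i j) (pow_nonneg (abs_nonneg _) _)))) (Finset.mem_univ l0))
      rw [hcardG l0, hcardG', hVG l0, Finset.sum_singleton]
      have hexp : 1 + (m + 1) - 1 = b := by omega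
      rw [hexp, Finset.mul_sum]
      apply Finset.sum_le_sum
      intro j hj
      have hcl := (hmemV' j).mp hj
      have hd := (hdist j hcl).1
      rw [mul_comm]
      exact mul_le_mul_of_nonneg_left (hpow1 _ hd) (hqpos l0 j)
    have hT2 : (∑ j ∈ (voronoiD absDist G' Gstar l0)ᶜ, q l0 j) ≤
        ∑ i, ∑ j, (if ∃ l, i ∈ voronoiD absDist G Gstar l ∧ j ∈ voronoiD absDist G' Gstar l
          then 0 else q i j) := by
      refine le_trans ?_ (Finset.single_le_sum (f := fun i =>
          ∑ j, (if ∃ l, i ∈ voronoiD absDist G Gstar l ∧ j ∈ voronoiD absDist G' Gstar l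
            then 0 else q i j))
        (fun i _ => Finset.sum_nonneg (fun j _ => by
          split
          · exact le_refl 0
          · exact hqpos i j)) (Finset.mem_univ l0))
      have hcongr : ∀ j ∈ (voronoiD absDist G' Gstar l0)ᶜ, q l0 j =
          (if ∃ l, l0 ∈ voronoiD absDist G Gstar l ∧ j ∈ voronoiD absDist G' Gstar l
            then 0 else q l0 j) := by
        intro j hj
        rw [Finset.mem_compl] at hj
        rw [if_neg]
        rintro ⟨l, hl1, hl2⟩
        rw [hVG l, Finset.mem_singleton] at hl1
        rw [← hl1] at hl2
        exact hj hl2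
      calc ∑ j ∈ (voronoiD absDist G' Gstar l0)ᶜ, q l0 j
          = ∑ j ∈ (voronoiD absDist G' Gstar l0)ᶜ,
            (if ∃ l, l0 ∈ voronoiD absDist G Gstar l ∧ j ∈ voronoiD absDist G' Gstar l
              then 0 else q l0 j) := Finset.sum_congr rfl hcongr
        _ ≤ ∑ j, (if ∃ l, l0 ∈ voronoiD absDist G Gstar l ∧ j ∈ voronoiD absDist G' Gstar l
              then 0 else q l0 j) := by
            apply Finset.sum_le_sum_of_subset_of_nonneg (Finset.subset_univ _)
            intro j _ _
            split
            · exact le_refl 0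
            · exact hqpos l0 j
    calc Gstar.p l0 * (ε / 2) ^ b
        = (ε / 2) ^ b * (∑ j ∈ voronoiD absDist G' Gstar l0, q l0 j) +
          (ε / 2) ^ b * (∑ j ∈ (voronoiD absDist G' Gstar l0)ᶜ, q l0 j) := by
          rw [← mul_add, hrowl0]; ring
      _ ≤ (ε / 2) ^ b * (∑ j ∈ voronoiD absDist G' Gstar l0, q l0 j) +
          (∑ j ∈ (voronoiD absDist G' Gstar l0)ᶜ, q l0 j) := by
          have h6 : (ε / 2) ^ b * (∑ j ∈ (voronoiD absDist G' Gstar l0)ᶜ, q l0 j) ≤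
              ∑ j ∈ (voronoiD absDist G' Gstar l0)ᶜ, q l0 j :=
            mul_le_of_le_one_left (Finset.sum_nonneg (fun j _ => hqpos l0 j)) hpow2
          exact add_le_add le_rfl h6
      _ ≤ _ := add_le_add hT1 hT2
  -- the two mixing measures are distinct
  have hnoteq : ¬ G.MixEq G' := by
    rintro ⟨eqv, heq⟩
    have h1 := (heq l0).1
    rw [hGatom, hGa_l0, hG'atom] at h1
    rcases h' : finSumFinEquiv.symm (eqv l0) with i | t <;> rw [h'] at h1
    · rw [hAdef] at h1
      simp only [Sum.elim_inl] at h1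
      by_cases hi : i = l0
      · rw [hi] at h1
        linarith only [h1, hεpos]
      · have h2 := hγle i l0 hi
        rw [h1] at h2
        rw [show Gstar.atom l0 + ε - Gstar.atom l0 = ε by ring,
          abs_of_nonneg hεpos.le] at h2
        linarith only [h2, hεγ, hγpos]
    · rw [hAdef] at h1
      simp only [Sum.elim_inr] at h1
      have h2 : ((t:ℝ) + 1) * ε ^ 2 = ε := by linarith only [h1]
      have h3 := hclusterle t
      rw [h2] at h3
      linarith only [h3, hεpos]
  -- membership of the atoms in Θ
  have hGmem : ∀ i, G.atom i ∈ Θ := by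
    intro i
    rw [hGatom]
    by_cases hi : i = l0
    · rw [hi, hGa_l0]
      apply hball
      rw [Metric.mem_ball, Real.dist_eq,
        show Gstar.atom l0 + ε - Gstar.atom l0 = ε by ring, abs_of_nonneg hεpos.le]
      exact hερ
    · rw [hGa_ne i hi]
      exact hmemT i
  have hG'mem : ∀ j, G'.atom j ∈ Θ := by
    intro j
    rw [hG'atom]
    rcases h' : finSumFinEquiv.symm j with i | t
    · rw [hAdef]
      simp only [Sum.elim_inl]
      exact hmemT i
    · rw [hAdef]
      simp only [Sum.elim_inr]
      apply hball
      rw [Metric.mem_ball, Real.dist_eq,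
        show Gstar.atom l0 + ((t:ℝ) + 1) * ε ^ 2 - Gstar.atom l0 = ((t:ℝ) + 1) * ε ^ 2 by ring,
        abs_of_pos (hclusterpos t)]
      linarith only [hclusterle t, hερ, hεpos]
  have hG'ord : G'.order = k0 := by
    show Gstar.order + m = k0
    omega
  refine ⟨kstar, G, G', by omega, ⟨hord, hGmem⟩, ⟨hG'ord, hG'mem⟩, hnoteq, ?_⟩
  calc M * wassersteinPow absDist (k + k0 - 2 * kstar + 1) G G'
      ≤ max M 1 * wassersteinPow absDist (k + k0 - 2 * kstar + 1) G G' :=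
        mul_le_mul_of_nonneg_right hMxM hWnonneg
    _ ≤ max M 1 * (Gstar.p l0 * ε ^ (k + k0 - 2 * kstar + 1)) :=
        mul_le_mul_of_nonneg_left hWub hMxpos.le
    _ ≤ max M 1 * ε ^ (k + k0 - 2 * kstar + 1) :=
        mul_le_mul_of_nonneg_left
          (mul_le_of_le_one_left (pow_nonneg hεpos.le _) hP0le1) hMxpos.le
    _ < Gstar.p l0 * (ε / 2) ^ b := hfinal
    _ ≤ Wtilde Gstar G G' := hWt
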